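/- Let m ∈ ℕ, let L be a ring, and let a, b ∈ L. Let n ∈ ℕ with n < m. Define the m×m matrices S by S[i,j] = [j = i+1] and U_b by U_b[i,j] = C(i,j)·(ad_a)^{i-j}(b) for i ≥ j and 0 otherwise, where ad_a(y) = a*y - y*a. Let e_0 be the standard basis column vector of size m with 1 in position 0, and let H_1 be the column vector with i-th entry a^i. Then (b*a)^n = e_0^T · (U_b·S)^n · H_1, where the right-hand side is a 1×1 matrix identified with its unique entry. -/

import Mathlib

lemma key_binom {L : Type*} [Ring L] (a b : L) (i : ℕ) :
    a ^ i * b = ∑ j ∈ Finset.range (i+1),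
      ((i.choose j) • ((fun y => a * y - y * a)^[i - j] b)) * a ^ j := by
  set La : AddMonoid.End L := AddMonoidHom.mulLeft a with hLa
  set Ra : AddMonoid.End L := AddMonoidHom.mulRight a with hRa
  have hmul : ∀ f g : AddMonoid.End L, ∀ x : L, (f * g) x = f (g x) := fun _ _ _ => rfl
  have h1 : Commute La Ra := by
    show La * Ra = Ra * La
    apply AddMonoidHom.ext
    intro y
    show a * (y * a) = (a * y) * a
    rw [mul_assoc]
  have hcomm : Commute Ra (La - Ra) := (h1.symm).sub_right (Commute.refl Ra)
  have hsum : Ra + (La - Ra) = La := by abel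
  have hpow := hcomm.add_pow i
  rw [hsum] at hpow
  have happly : ∀ (s : Finset ℕ) (f : ℕ → AddMonoid.End L) (x : L),
      (∑ j ∈ s, f j) x = ∑ j ∈ s, f j x := by
    intro s f x
    classical
    induction s using Finset.induction with
    | empty => simp [AddMonoid.End.zero_apply]
    | insert _ _ h ih => rw [Finset.sum_insert h, Finset.sum_insert h, ← ih]; rfl
  have happ := congrArg (fun f => f b) hpow
  simp only [happly] at happ
  have hLpow : ∀ k, (La ^ k) b = a ^ k * b := by
    intro k; induction k with
    | zero => simp [AddMonoid.End.one_apply]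
    | succ k ih =>
      rw [pow_succ', hmul, ih, pow_succ', mul_assoc]; rfl
  have hRpow : ∀ k x, (Ra ^ k) x = x * a ^ k := by
    intro k; induction k with
    | zero => intro x; simp [AddMonoid.End.one_apply]
    | succ k ih => intro x; rw [pow_succ', hmul, ih, pow_succ, ← mul_assoc]; rfl
  have hDpow : ∀ k x, ((La - Ra) ^ k) x = (fun y => a * y - y * a)^[k] x := by
    intro k; induction k with
    | zero => intro x; simp [AddMonoid.End.one_apply]
    | succ k ih =>
      intro x
      rw [pow_succ, hmul, Function.iterate_succ_apply, ih]
      rfl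
  rw [hLpow] at happ
  rw [happ]
  apply Finset.sum_congr rfl
  intro j hj
  have hnat : ∀ (c : ℕ) (x : L), ((c : AddMonoid.End L)) x = c • x := by
    intro c x
    induction c with
    | zero => simp [AddMonoid.End.zero_apply]
    | succ c ih => rw [Nat.cast_succ, succ_nsmul, ← ih]; rfl
  rw [hmul, hmul, hnat, map_nsmul, hDpow, map_nsmul, hRpow, smul_mul_assoc]

theorem stmt_10 (m n : ℕ) (hnm : n < m) (L : Type*) [Ring L] (a b : L)
    (S : Matrix (Fin m) (Fin m) L)
    (hS : ∀ i j : Fin m, S i j = if (j : ℕ) = (i : ℕ) + 1 then 1 else 0)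
    (U : Matrix (Fin m) (Fin m) L)
    (hU : ∀ i j : Fin m, U i j =
      if (j : ℕ) ≤ (i : ℕ) then
        ((i : ℕ).choose j) • ((fun y => a * y - y * a)^[(i : ℕ) - (j : ℕ)] b)
      else 0)
    (e₀ : Matrix (Fin m) (Fin 1) L)
    (he : ∀ p : Fin m, ∀ q : Fin 1, e₀ p q = if (p : ℕ) = 0 then 1 else 0)
    (H₁ : Matrix (Fin m) (Fin 1) L)
    (hH : ∀ i : Fin m, ∀ j : Fin 1, H₁ i j = a ^ (i : ℕ)) :
    (b * a) ^ n = (e₀.transpose * (U * S) ^ n * H₁) 0 0 := by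
  have claim : ∀ k : ℕ, ∀ i : Fin m, (i : ℕ) + k < m →
      ((U * S) ^ k * H₁) i 0 = a ^ (i : ℕ) * (b * a) ^ k := by
    intro k
    induction k with
    | zero =>
      intro i _
      rw [pow_zero, Matrix.one_mul, hH, pow_zero, mul_one]
    | succ k ih =>
      intro i hi
      set V := (U * S) ^ k * H₁ with hV
      have hW : ∀ p : Fin m, (p : ℕ) + (k + 1) < m →
          (S * V) p 0 = a ^ ((p : ℕ) + 1) * (b * a) ^ k := by
        intro p hp
        have hp1 : (p : ℕ) + 1 < m := by omega
        rw [Matrix.mul_apply]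
        rw [Finset.sum_eq_single (⟨(p : ℕ) + 1, hp1⟩ : Fin m)]
        · rw [hS, if_pos rfl, one_mul]
          exact ih ⟨(p : ℕ) + 1, hp1⟩ (by simpa using (by omega : (p : ℕ) + 1 + k < m))
        · intro q _ hq
          rw [hS, if_neg, zero_mul]
          intro hc
          exact hq (Fin.ext hc)
        · intro h; exact absurd (Finset.mem_univ _) h
      have hrw : (U * S) ^ (k + 1) * H₁ = U * (S * V) := by
        rw [pow_succ', Matrix.mul_assoc, Matrix.mul_assoc]
      rw [hrw, Matrix.mul_apply]
      have hterm : ∀ j : Fin m, U i j * (S * V) j 0 =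
          if (j : ℕ) ≤ (i : ℕ) then
            ((((i : ℕ).choose (j : ℕ)) • ((fun y => a * y - y * a)^[(i : ℕ) - (j : ℕ)] b))
              * a ^ (j : ℕ)) * (a * (b * a) ^ k)
          else 0 := by
        intro j
        rw [hU]
        by_cases h : (j : ℕ) ≤ (i : ℕ)
        · rw [if_pos h, if_pos h, hW j (by omega), pow_succ]
          simp only [mul_assoc]
        · rw [if_neg h, if_neg h, zero_mul]
      simp only [hterm]
      rw [Fin.sum_univ_eq_sum_range (fun t => if t ≤ (i : ℕ) then
            ((((i : ℕ).choose t) • ((fun y => a * y - y * a)^[(i : ℕ) - t] b))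
              * a ^ t) * (a * (b * a) ^ k) else 0) m]
      rw [← Finset.sum_subset (Finset.range_subset_range.mpr (by omega : (i : ℕ) + 1 ≤ m))
        (by intro t _ ht; rw [if_neg]; simpa using ht)]
      have : ∀ t ∈ Finset.range ((i : ℕ) + 1), (if t ≤ (i : ℕ) then
            ((((i : ℕ).choose t) • ((fun y => a * y - y * a)^[(i : ℕ) - t] b))
              * a ^ t) * (a * (b * a) ^ k) else 0) =
            ((((i : ℕ).choose t) • ((fun y => a * y - y * a)^[(i : ℕ) - t] b))
              * a ^ t) * (a * (b * a) ^ k) := by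
        intro t ht
        rw [if_pos (by simpa using Nat.lt_succ_iff.mp (Finset.mem_range.mp ht))]
      rw [Finset.sum_congr rfl this, ← Finset.sum_mul, ← key_binom a b (i : ℕ)]
      rw [pow_succ' (b * a) k]
      simp only [mul_assoc]
  have h0 : (0 : ℕ) + n < m := by omega
  have hm : 0 < m := by omega
  rw [Matrix.mul_assoc, Matrix.mul_apply]
  rw [Finset.sum_eq_single (⟨0, hm⟩ : Fin m)]
  · rw [Matrix.transpose_apply, he]
    rw [if_pos rfl, one_mul, claim n ⟨0, hm⟩ (by simpa using h0), pow_zero, one_mul]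
  · intro q _ hq
    rw [Matrix.transpose_apply, he, if_neg, zero_mul]
    intro hc
    exact hq (Fin.ext hc)
  · intro h; exact absurd (Finset.mem_univ _) h
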